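/- The lattice ℰ^N satisfies the Jordan–Dedekind chain condition (all maximal chains between two comparable elements have the same length), and its rank function r : ℰ^N → ℤ_+ is given by r(A,P) = (n − |P|) + min{|A|,1}, i.e., r(A,P) = n − |P| if A = ∅ and r(A,P) = n − |P| + 1 if A ≠ ∅, where |P| is the number of blocks of the partition P. -/

import Mathlib

open scoped BigOperators

/-- `modp n A` is the modular partition `P^A_⊥` of `Fin n` whose unique (possibly)
non-singleton block is `A`, all other blocks being singletons. -/
def modp (n : ℕ) (A : Set (Fin n)) : Setoid (Fin n) where
  r x y := x = y ∨ (x ∈ A ∧ y ∈ A)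
  iseqv := by
    refine ⟨fun _ => Or.inl rfl, ?_, ?_⟩
    · rintro x y (rfl | ⟨hx, hy⟩)
      · exact Or.inl rfl
      · exact Or.inr ⟨hy, hx⟩
    · rintro x y z (rfl | ⟨hx, hy⟩) h
      · exact h
      · rcases h with rfl | ⟨hy', hz⟩
        · exact Or.inr ⟨hx, hy⟩
        · exact Or.inr ⟨hx, hz⟩

/-- The product `X^N = 2^N × 𝒫^N` of the subset lattice and the partition lattice,
ordered componentwise. -/
abbrev XN (n : ℕ) := Set (Fin n) × Setoid (Fin n)

/-- The closure operator `cl` on `X^N`:  `cl(∅,P) = (∅,P)` and, for `A ≠ ∅`,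
`cl(A,P) = (Ā, P ⊔ P^A_⊥)` where `Ā` is the block of `P ⊔ P^A_⊥` containing `A`. -/
def EmbClosure (n : ℕ) (x : XN n) : XN n :=
  ({y | ∃ a ∈ x.1, (x.2 ⊔ modp n x.1) y a}, x.2 ⊔ modp n x.1)

/-- An embedded subset is a pair that coincides with its closure. -/
def IsEmbedded (n : ℕ) (x : XN n) : Prop := EmbClosure n x = x

/-- The lattice `ℰ^N` of embedded subsets, with the induced order. -/
abbrev Emb (n : ℕ) := {x : XN n // IsEmbedded n x}

lemma modp_le_of_subsingleton {n : ℕ} {A : Set (Fin n)} (h : A.Subsingleton)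
    (Q : Setoid (Fin n)) : modp n A ≤ Q := by
  rw [Setoid.le_def]
  intro x y hxy
  rcases hxy with rfl | ⟨hx, hy⟩
  · exact Q.refl' x
  · obtain rfl := h hx hy
    exact Q.refl' x

lemma modp_eq_bot_of_subsingleton {n : ℕ} {A : Set (Fin n)} (h : A.Subsingleton) :
    modp n A = ⊥ :=
  le_antisymm (modp_le_of_subsingleton h ⊥) bot_le

lemma embedded_empty (n : ℕ) (Q : Setoid (Fin n)) : IsEmbedded n (∅, Q) := by
  unfold IsEmbedded EmbClosure
  refine Prod.ext ?_ ?_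
  · simp
  · simpa using sup_eq_left.mpr (modp_le_of_subsingleton Set.subsingleton_empty Q)

lemma embedded_univ_top (n : ℕ) : IsEmbedded n (Set.univ, ⊤) := by
  unfold IsEmbedded EmbClosure
  refine Prod.ext ?_ ?_
  · ext y
    simp only [Set.mem_setOf_eq, Set.mem_univ, iff_true]
    exact ⟨y, trivial, Setoid.refl' _ y⟩
  · exact sup_eq_left.mpr le_top

lemma embedded_singleton (n : ℕ) (i : Fin n) : IsEmbedded n ({i}, ⊥) := by
  have hb : modp n ({i} : Set (Fin n)) = ⊥ :=
    modp_eq_bot_of_subsingleton Set.subsingleton_singleton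
  unfold IsEmbedded EmbClosure
  refine Prod.ext ?_ ?_
  · ext y
    simp only [Set.mem_setOf_eq, hb, sup_idem, Set.mem_singleton_iff]
    constructor
    · rintro ⟨a, ha, hrel⟩
      subst ha
      have h2 : ((⊥ : Setoid (Fin n)) ⊔ modp n {a}) y a := hrel
      rw [hb, sup_idem] at h2
      exact h2
    · rintro rfl
      exact ⟨y, rfl, Setoid.refl' _ y⟩
  · simp [hb]

/-- The bottom element `(∅, P_⊥)` of `ℰ^N`. -/
def botE (n : ℕ) : Emb n := ⟨(∅, ⊥), embedded_empty n ⊥⟩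

/-- The top element `(N, P^⊤)` of `ℰ^N`. -/
def topE (n : ℕ) : Emb n := ⟨(Set.univ, ⊤), embedded_univ_top n⟩

/-- The atom `({i}, P_⊥)` of `ℰ^N`. -/
def atomS (n : ℕ) (i : Fin n) : Emb n := ⟨({i}, ⊥), embedded_singleton n i⟩

/-- The atom `(∅, [ij])` of `ℰ^N`, where `[ij]` is the atom of the partition lattice
whose unique non-singleton block is the pair `{i, j}`. -/
def atomP (n : ℕ) (i j : Fin n) : Emb n := ⟨(∅, modp n {i, j}), embedded_empty n _⟩

/-- A pair is an atom candidate: of the form `({i},P_⊥)` or `(∅,[ij])` with `i ≠ j`. -/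
def IsAtomPair (n : ℕ) (a : XN n) : Prop :=
  (∃ i : Fin n, a = ({i}, ⊥)) ∨ ∃ i j : Fin n, i ≠ j ∧ a = (∅, modp n {i, j})

/-- The number of blocks `|P|` of a partition. -/
noncomputable def numBlocks {α : Type*} (P : Setoid α) : ℕ := P.classes.ncard

/-- The rank function `r(A,P) = (n − |P|) + min{|A|,1}` of `ℰ^N`. -/
noncomputable def erank (n : ℕ) (x : XN n) : ℕ := (n - numBlocks x.2) + min x.1.ncard 1

/-- The partition `Q^S` of `S` induced by a partition `Q` of `N`. -/
def indPart {n : ℕ} (S : Set (Fin n)) (Q : Setoid (Fin n)) : Setoid S :=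
  Setoid.comap Subtype.val Q

/-- `mu` is the Möbius function of the (finite) poset `α`. -/
def IsMobius {α : Type*} [PartialOrder α] (mu : α → α → ℤ) : Prop :=
  (∀ x, mu x x = 1) ∧
  (∀ x y, ¬x ≤ y → mu x y = 0) ∧
  (∀ x y, x < y → mu x y = -∑ᶠ z ∈ Set.Ico x y, mu x z)

namespace JD

variable {n : ℕ}

/-- The class of `a` under `P`. -/
def cls (P : Setoid (Fin n)) (a : Fin n) : Set (Fin n) := {x | P x a}

lemma mem_cls {P : Setoid (Fin n)} {x a : Fin n} : x ∈ cls P a ↔ P x a := Iff.rfl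

lemma self_mem_cls {P : Setoid (Fin n)} {a : Fin n} : a ∈ cls P a := P.refl' a

lemma cls_eq_cls {P : Setoid (Fin n)} {a b : Fin n} : cls P a = cls P b ↔ P a b := by
  constructor
  · intro h
    have : a ∈ cls P b := h ▸ self_mem_cls
    exact this
  · intro h
    ext x
    exact ⟨fun hx => P.trans' hx h, fun hx => P.trans' hx (P.symm' h)⟩

lemma classes_eq_range (P : Setoid (Fin n)) : P.classes = Set.range (cls P) := by
  ext s
  simp only [Setoid.classes, Set.mem_setOf_eq, Set.mem_range]
  constructor
  · rintro ⟨y, rfl⟩; exact ⟨y, rfl⟩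
  · rintro ⟨y, rfl⟩; exact ⟨y, rfl⟩

lemma numBlocks_eq (P : Setoid (Fin n)) : numBlocks P = (Set.range (cls P)).ncard := by
  rw [numBlocks, classes_eq_range]

lemma numBlocks_le_n (P : Setoid (Fin n)) : numBlocks P ≤ n := by
  rw [numBlocks_eq, ← Set.image_univ]
  calc (cls P '' Set.univ).ncard ≤ (Set.univ : Set (Fin n)).ncard :=
        Set.ncard_image_le (Set.toFinite _)
    _ = n := by rw [Set.ncard_univ, Nat.card_eq_fintype_card, Fintype.card_fin]

lemma numBlocks_mono {P Q : Setoid (Fin n)} (h : P ≤ Q) : numBlocks Q ≤ numBlocks P := by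
  rw [numBlocks_eq, numBlocks_eq]
  set f : Set (Fin n) → Set (Fin n) := fun S => {y | ∃ x ∈ S, Q y x} with hf
  have hsub : Set.range (cls Q) ⊆ f '' Set.range (cls P) := by
    rintro s ⟨a, rfl⟩
    refine ⟨cls P a, ⟨a, rfl⟩, ?_⟩
    ext y
    simp only [hf, Set.mem_setOf_eq, cls]
    constructor
    · rintro ⟨x, hx, hyx⟩
      exact Q.trans' hyx (h hx)
    · intro hy
      exact ⟨a, P.refl' a, hy⟩
  calc (Set.range (cls Q)).ncard ≤ (f '' Set.range (cls P)).ncard :=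
        Set.ncard_le_ncard hsub (Set.toFinite _)
    _ ≤ (Set.range (cls P)).ncard := Set.ncard_image_le (Set.toFinite _)

/-- The partition obtained from `P` by merging the classes of `a` and `b`. -/
def merge (P : Setoid (Fin n)) (a b : Fin n) : Setoid (Fin n) where
  r x y := P x y ∨ ((P x a ∨ P x b) ∧ (P y a ∨ P y b))
  iseqv := by
    refine ⟨fun x => Or.inl (P.refl' x), ?_, ?_⟩
    · rintro x y (h | ⟨hx, hy⟩)
      · exact Or.inl (P.symm' h)
      · exact Or.inr ⟨hy, hx⟩
    · rintro x y z (h | ⟨hx, hy⟩) (h' | ⟨hy', hz⟩)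
      · exact Or.inl (P.trans' h h')
      · exact Or.inr ⟨hy'.imp (P.trans' h) (P.trans' h), hz⟩
      · exact Or.inr ⟨hx, hy.imp (P.trans' (P.symm' h')) (P.trans' (P.symm' h'))⟩
      · exact Or.inr ⟨hx, hz⟩

lemma merge_rel_iff {P : Setoid (Fin n)} {a b x y : Fin n} :
    (merge P a b) x y ↔ P x y ∨ ((P x a ∨ P x b) ∧ (P y a ∨ P y b)) := Iff.rfl

lemma le_merge (P : Setoid (Fin n)) (a b : Fin n) : P ≤ merge P a b := by
  rw [Setoid.le_def]
  intro x y h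
  exact Or.inl h

lemma merge_rel_ab (P : Setoid (Fin n)) (a b : Fin n) : (merge P a b) a b :=
  Or.inr ⟨Or.inl (P.refl' a), Or.inr (P.refl' b)⟩

lemma merge_le {P Q : Setoid (Fin n)} {a b : Fin n} (hPQ : P ≤ Q) (hab : Q a b) :
    merge P a b ≤ Q := by
  rw [Setoid.le_def]
  have key : ∀ z : Fin n, (P z a ∨ P z b) → Q z a := by
    rintro z (h | h)
    · exact hPQ h
    · exact Q.trans' (hPQ h) (Q.symm' hab)
  rintro x y (h | ⟨hx, hy⟩)
  · exact hPQ h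
  · exact Q.trans' (key x hx) (Q.symm' (key y hy))

lemma cls_merge_of_not {P : Setoid (Fin n)} {a b x : Fin n}
    (hxa : ¬P x a) (hxb : ¬P x b) : cls (merge P a b) x = cls P x := by
  ext y
  simp only [cls, Set.mem_setOf_eq, merge_rel_iff]
  constructor
  · rintro (h | ⟨_, hx⟩)
    · exact h
    · exact absurd hx (by tauto)
  · exact Or.inl

lemma cls_merge_of {P : Setoid (Fin n)} {a b x : Fin n}
    (hx : P x a ∨ P x b) : cls (merge P a b) x = cls P a ∪ cls P b := by
  ext y
  simp only [cls, Set.mem_setOf_eq, merge_rel_iff, Set.mem_union, Set.mem_setOf_eq]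
  constructor
  · rintro (h | ⟨hy, _⟩)
    · exact hx.imp (P.trans' h) (P.trans' h)
    · exact hy
  · intro hy
    exact Or.inr ⟨hy, hx⟩

lemma numBlocks_merge {P : Setoid (Fin n)} {a b : Fin n} (hab : ¬P a b) :
    numBlocks (merge P a b) + 1 = numBlocks P := by
  set u := cls P a with hu
  set v := cls P b with hv
  have huv : u ≠ v := fun h => hab (cls_eq_cls.mp h)
  have key : Set.range (cls (merge P a b)) = insert (u ∪ v) (Set.range (cls P) \ {u, v}) := by
    ext s
    constructor
    · rintro ⟨x, rfl⟩
      by_cases hx : P x a ∨ P x b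
      · rw [cls_merge_of hx]
        exact Set.mem_insert _ _
      · push_neg at hx
        rw [cls_merge_of_not hx.1 hx.2]
        refine Set.mem_insert_of_mem _ ⟨⟨x, rfl⟩, ?_⟩
        rintro (h | h)
        · exact hx.1 (cls_eq_cls.mp h)
        · exact hx.2 (cls_eq_cls.mp h)
    · rintro (rfl | ⟨⟨x, rfl⟩, hs⟩)
      · exact ⟨a, cls_merge_of (Or.inl (P.refl' a))⟩
      · have hxa : ¬P x a := fun h => hs (Or.inl (cls_eq_cls.mpr h))
        have hxb : ¬P x b := fun h => hs (Or.inr (cls_eq_cls.mpr h))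
        exact ⟨x, cls_merge_of_not hxa hxb⟩
  have hw : (u ∪ v) ∉ Set.range (cls P) \ {u, v} := by
    rintro ⟨⟨x, hx⟩, hx2⟩
    have ha : a ∈ cls P x := hx ▸ Set.mem_union_left _ self_mem_cls
    have : cls P x = u := cls_eq_cls.mpr (P.symm' ha)
    exact hx2 (Or.inl (hx.symm.trans this))
  have hpair : {u, v} ⊆ Set.range (cls P) := by
    rintro s (rfl | rfl)
    · exact ⟨a, rfl⟩
    · exact ⟨b, rfl⟩
  have h2 : 2 ≤ (Set.range (cls P)).ncard := by
    calc 2 = ({u, v} : Set (Set (Fin n))).ncard := (Set.ncard_pair huv).symm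
      _ ≤ _ := Set.ncard_le_ncard hpair (Set.toFinite _)
  rw [numBlocks_eq, numBlocks_eq, key,
    Set.ncard_insert_of_notMem hw (Set.toFinite _),
    Set.ncard_diff hpair (Set.toFinite _), Set.ncard_pair huv]
  omega

/-- Structure of embedded subsets: the set is empty or a block of the partition. -/
lemma isEmbedded_iff {A : Set (Fin n)} {P : Setoid (Fin n)} :
    IsEmbedded n (A, P) ↔ A = ∅ ∨ ∃ a, A = cls P a := by
  constructor
  · intro h
    rcases Set.eq_empty_or_nonempty A with hA | ⟨a₀, ha₀⟩
    · exact Or.inl hA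
    · right
      have hsup : P ⊔ modp n A = P := congrArg Prod.snd h
      have hmod : modp n A ≤ P := sup_eq_left.mp hsup
      have hfst : {y | ∃ a ∈ A, ((A, P).2 ⊔ modp n (A, P).1) y a} = A := congrArg Prod.fst h
      refine ⟨a₀, ?_⟩
      ext y
      constructor
      · intro hy
        exact hmod (Or.inr ⟨hy, ha₀⟩)
      · intro hy
        rw [← hfst]
        refine ⟨a₀, ha₀, ?_⟩
        show (P ⊔ modp n A) y a₀
        rw [hsup]
        exact hy
  · rintro (rfl | ⟨a, rfl⟩)
    · exact embedded_empty n P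
    · have hmod : modp n (cls P a) ≤ P := by
        rw [Setoid.le_def]
        rintro x y (rfl | ⟨hx, hy⟩)
        · exact P.refl' x
        · exact P.trans' hx (P.symm' hy)
      have hsup : P ⊔ modp n (cls P a) = P := sup_eq_left.mpr hmod
      unfold IsEmbedded EmbClosure
      refine Prod.ext ?_ hsup
      show {y | ∃ c ∈ cls P a, (P ⊔ modp n (cls P a)) y c} = cls P a
      rw [hsup]
      ext y
      simp only [Set.mem_setOf_eq]
      constructor
      · rintro ⟨c, hc, hyc⟩
        exact P.trans' hyc hc
      · intro hy
        exact ⟨a, self_mem_cls, hy⟩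

lemma erank_empty (P : Setoid (Fin n)) : erank n (∅, P) = n - numBlocks P := by
  simp [erank]

lemma erank_nonempty {A : Set (Fin n)} (hA : A.Nonempty) (P : Setoid (Fin n)) :
    erank n (A, P) = (n - numBlocks P) + 1 := by
  have h1 : 0 < A.ncard := (Set.ncard_pos (Set.toFinite _)).mpr hA
  simp only [erank]
  omega

lemma lt_of_ne_le {P Q : Setoid (Fin n)} (hPQ : P ≤ Q) (hne : P ≠ Q) :
    ∃ a b : Fin n, Q a b ∧ ¬P a b := by
  have : ¬ Q ≤ P := fun h => hne (le_antisymm hPQ h)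
  rw [Setoid.le_def] at this
  push_neg at this
  exact this

lemma numBlocks_lt {P Q : Setoid (Fin n)} (hPQ : P ≤ Q) (hne : P ≠ Q) :
    numBlocks Q < numBlocks P := by
  obtain ⟨a, b, hQ, hP⟩ := lt_of_ne_le hPQ hne
  have h1 : numBlocks Q ≤ numBlocks (merge P a b) := numBlocks_mono (merge_le hPQ hQ)
  have h2 := numBlocks_merge hP
  omega

lemma erank_strictMono {x y : Emb n} (h : x < y) :
    erank n x.val < erank n y.val := by
  obtain ⟨⟨A, P⟩, hx⟩ := x
  obtain ⟨⟨B, Q⟩, hy⟩ := y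
  have hle : A ⊆ B ∧ P ≤ Q := h.le
  have hne : (A, P) ≠ (B, Q) := by
    intro hEq
    exact absurd (Subtype.ext hEq : (⟨(A,P),hx⟩ : Emb n) = ⟨(B,Q),hy⟩) h.ne
  obtain ⟨hAB, hPQ⟩ := hle
  show erank n (A, P) < erank n (B, Q)
  by_cases hPQe : P = Q
  · subst hPQe
    -- A ≠ B, both empty-or-blocks of P
    have hABne : A ≠ B := fun hab => hne (by rw [hab])
    rcases (isEmbedded_iff.mp hx) with rfl | ⟨a, rfl⟩
    · rcases (isEmbedded_iff.mp hy) with rfl | ⟨b, rfl⟩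
      · exact absurd rfl hABne
      · rw [erank_empty, erank_nonempty ⟨b, self_mem_cls⟩]
        omega
    · rcases (isEmbedded_iff.mp hy) with rfl | ⟨b, rfl⟩
      · exact absurd (Set.subset_empty_iff.mp hAB) (by
          intro hAe
          exact (hAe ▸ self_mem_cls : a ∈ (∅ : Set (Fin n))))
      · have : P a b := hAB self_mem_cls
        exact absurd (cls_eq_cls.mpr this) hABne
  · have hnb : numBlocks Q < numBlocks P := numBlocks_lt hPQ hPQe
    have hnn : numBlocks P ≤ n := numBlocks_le_n P
    have hm : min A.ncard 1 ≤ min B.ncard 1 :=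
      min_le_min (Set.ncard_le_ncard hAB (Set.toFinite _)) le_rfl
    simp only [erank] at *
    omega

lemma erank_dense {x y : Emb n} (hlt : x < y)
    (hr : erank n x.val + 1 < erank n y.val) :
    ∃ z : Emb n, x < z ∧ z < y := by
  obtain ⟨⟨A, P⟩, hx⟩ := x
  obtain ⟨⟨B, Q⟩, hy⟩ := y
  obtain ⟨hAB, hPQ⟩ : A ⊆ B ∧ P ≤ Q := hlt.le
  have hr' : erank n (A, P) + 1 < erank n (B, Q) := hr
  clear hr
  have hPQe : P ≠ Q := by
    rintro rfl
    -- then erank difference is at most 1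
    simp only [erank] at hr'
    have h1 : min A.ncard 1 ≤ 1 := min_le_right _ _
    have h2 : min B.ncard 1 ≤ 1 := min_le_right _ _
    omega
  obtain ⟨a, b, hQab, hPab⟩ := lt_of_ne_le hPQ hPQe
  have hmerge_le : merge P a b ≤ Q := merge_le hPQ hQab
  have hPm : P ≠ merge P a b := by
    intro hEq
    exact hPab (hEq ▸ merge_rel_ab P a b)
  have hnb := numBlocks_merge hPab
  have hnn : numBlocks P ≤ n := numBlocks_le_n P
  rcases (isEmbedded_iff.mp hx) with rfl | ⟨a₀, rfl⟩
  · -- z = (∅, merge P a b)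
    refine ⟨⟨(∅, merge P a b), embedded_empty n _⟩, ?_, ?_⟩
    · refine lt_of_le_of_ne ⟨le_rfl, le_merge P a b⟩ ?_
      intro hEq
      exact hPm (congrArg (Prod.snd ∘ Subtype.val) hEq)
    · refine lt_of_le_of_ne ⟨Set.empty_subset _, hmerge_le⟩ ?_
      intro hEq
      have hpq := Subtype.ext_iff.mp hEq
      have h2 : merge P a b = Q := congrArg Prod.snd hpq
      have h1 : (∅ : Set (Fin n)) = B := congrArg Prod.fst hpq
      subst h2
      subst h1
      rw [erank_empty, erank_empty] at hr'
      omega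
  · -- A = cls P a₀ nonempty; z = (cls (merge P a b) a₀, merge P a b)
    have hBne : B.Nonempty := ⟨a₀, hAB self_mem_cls⟩
    obtain rfl | ⟨b₀, rfl⟩ := isEmbedded_iff.mp hy
    · exact absurd hBne (by simp)
    refine ⟨⟨(cls (merge P a b) a₀, merge P a b),
      isEmbedded_iff.mpr (Or.inr ⟨a₀, rfl⟩)⟩, ?_, ?_⟩
    · refine lt_of_le_of_ne ⟨?_, le_merge P a b⟩ ?_
      · intro y hy
        exact le_merge P a b hy
      · intro hEq
        exact hPm (congrArg (Prod.snd ∘ Subtype.val) hEq)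
    · refine lt_of_le_of_ne ⟨?_, hmerge_le⟩ ?_
      · intro y hy
        have h1 : Q y a₀ := hmerge_le hy
        have h2 : Q a₀ b₀ := hAB self_mem_cls
        exact Q.trans' h1 h2
      · intro hEq
        have hpq := Subtype.ext_iff.mp hEq
        have h2 : merge P a b = Q := congrArg Prod.snd hpq
        subst h2
        rw [erank_nonempty ⟨a₀, self_mem_cls⟩,
          erank_nonempty ⟨b₀, self_mem_cls⟩] at hr'
        omega

lemma erank_covBy {x y : Emb n} (h : x ⋖ y) :
    erank n y.val = erank n x.val + 1 := by
  have h1 := erank_strictMono h.lt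
  by_contra hne
  have h2 : erank n x.val + 1 < erank n y.val := by omega
  obtain ⟨z, hz1, hz2⟩ := erank_dense h.lt h2
  exact h.2 hz1 hz2

lemma chain_len : ∀ (l : List (Emb n)) (x y : Emb n), l.Chain' (· ⋖ ·) →
    l.head? = some x → l.getLast? = some y →
    l.length + erank n x.val = erank n y.val + 1 ∧ erank n x.val ≤ erank n y.val := by
  intro l
  induction l with
  | nil => intro x y _ hh _; simp at hh
  | cons a t ih =>
    intro x y hc hh hl
    have hax : a = x := by simpa using hh
    subst hax
    cases t with
    | nil =>
      have : a = y := by simpa using hl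
      subst this
      exact ⟨by rw [List.length_singleton]; omega, le_rfl⟩
    | cons b t' =>
      have hcov : a ⋖ b := (List.isChain_cons_cons.mp hc).1
      have hc' : (b :: t').Chain' (· ⋖ ·) := (List.isChain_cons_cons.mp hc).2
      have hl' : (b :: t').getLast? = some y := by
        rw [← List.getLast?_cons_cons (a := a)]; exact hl
      obtain ⟨h1, h2⟩ := ih b y hc' rfl hl'
      have h3 := erank_covBy hcov
      simp only [List.length_cons] at *
      omega

end JD

theorem jordan_dedekind_rank (n : ℕ) (hn : 1 ≤ n) :
    ∀ x y : Emb n, x ≤ y →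
      ∀ l : List (Emb n), l.Chain' (· ⋖ ·) → l.head? = some x → l.getLast? = some y →
        l.length = (erank n y.val - erank n x.val) + 1 := by 
  intro x y _ l hc hh hl
  obtain ⟨h1, h2⟩ := JD.chain_len l x y hc hh hl
  omega
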